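/- There exists a constant C > 0 such that the following holds. For every Δ with 0 < Δ < 1/2 there exist m ∈ ℕ with m ≤ C/Δ² and unitary matrices U_1, …, U_m ∈ U(ℂ^2 ⊗ ℂ^2 ⊗ ℂ^2) (indexed by Fin 2 × Fin 2 × Fin 2), each of which acts nontrivially only on qubits {1,2} or only on qubits {2,3} — i.e. each U_t satisfies either U_t((a,b,c),(a',b',c')) = A((a,b),(a',b'))·[c = c'] for some unitary A on ℂ^2 ⊗ ℂ^2, or U_t((a,b,c),(a',b',c')) = [a = a']·A((b,c),(b',c')) for some unitary A on ℂ^2 ⊗ ℂ^2 — such that: (1) U_m ⋯ U_1 |000⟩ = |111⟩, and (2) for every i ∈ [m], the intermediate state v_i := U_i ⋯ U_1 |000⟩ satisfies 1 − |⟨000|v_i⟩|² − |⟨111|v_i⟩|² ≤ Δ. -/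

import Mathlib

set_option maxHeartbeats 1000000

/-- The state obtained after applying the first `k` of the matrices `U 0, U 1, …` to `v`. -/
noncomputable def applySeq {n : Type*} [Fintype n]
    (U : ℕ → Matrix n n ℂ) (v : n → ℂ) : ℕ → n → ℂ
  | 0 => v
  | k + 1 => (U k).mulVec (applySeq U v k)

/-- The computational basis state `|p⟩` of the three-qubit space. -/
noncomputable def basisState3 (p : Fin 2 × Fin 2 × Fin 2) : Fin 2 × Fin 2 × Fin 2 → ℂ :=
  Pi.single p 1



abbrev Q3 := Fin 2 × Fin 2 × Fin 2

noncomputable def rotM (d : ℂ) : Matrix (Fin 2) (Fin 2) ℂ :=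
  !![(d.re : ℂ), -(d.im : ℂ); (d.im : ℂ), (d.re : ℂ)]

noncomputable def abMat (d₁ d₂ : ℂ) : Matrix (Fin 2 × Fin 2) (Fin 2 × Fin 2) ℂ :=
  fun p q => if p.2 = q.2 then rotM (if p.2 = 0 then d₁ else d₂) p.1 q.1 else 0

noncomputable def bcMat (c s : ℝ) : Matrix (Fin 2 × Fin 2) (Fin 2 × Fin 2) ℂ :=
  fun p q =>
    if p = (0,0) ∧ q = (0,0) then (c : ℂ)
    else if p = (0,0) ∧ q = (1,1) then ((-s : ℝ) : ℂ)
    else if p = (1,1) ∧ q = (0,0) then ((s : ℝ) : ℂ)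
    else if p = (1,1) ∧ q = (1,1) then ((c : ℝ) : ℂ)
    else if p = q ∧ p ≠ (0,0) ∧ p ≠ (1,1) then 1 else 0

lemma normSq_eq_of_abs {d : ℂ} (h : ‖d‖ = 1) : d.re^2 + d.im^2 = 1 := by
  have := Complex.sq_norm d
  rw [h] at this
  simpa [Complex.normSq_apply, pow_two] using this.symm

lemma abMat_unitary {d₁ d₂ : ℂ} (h₁ : ‖d₁‖ = 1) (h₂ : ‖d₂‖ = 1) :
    abMat d₁ d₂ ∈ Matrix.unitaryGroup (Fin 2 × Fin 2) ℂ := by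
  have e₁ := normSq_eq_of_abs h₁
  have e₂ := normSq_eq_of_abs h₂
  rw [Matrix.mem_unitaryGroup_iff']
  ext ⟨p1,p2⟩ ⟨q1,q2⟩
  rw [Matrix.mul_apply]
  fin_cases p1 <;> fin_cases p2 <;> fin_cases q1 <;> fin_cases q2 <;>
    simp [Fintype.sum_prod_type, Fin.sum_univ_two, abMat, rotM, Matrix.one_apply,
      Prod.ext_iff, Complex.ext_iff] <;>
    (try constructor) <;> nlinarith [e₁, e₂]

lemma bcMat_unitary {c s : ℝ} (h : c^2 + s^2 = 1) :
    bcMat c s ∈ Matrix.unitaryGroup (Fin 2 × Fin 2) ℂ := by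
  rw [Matrix.mem_unitaryGroup_iff']
  ext ⟨p1,p2⟩ ⟨q1,q2⟩
  rw [Matrix.mul_apply]
  fin_cases p1 <;> fin_cases p2 <;> fin_cases q1 <;> fin_cases q2 <;>
    simp [Fintype.sum_prod_type, Fin.sum_univ_two, bcMat, Matrix.one_apply,
      Prod.ext_iff, Complex.ext_iff] <;>
    (try constructor) <;> nlinarith [h]



noncomputable def abFull (A : Matrix (Fin 2 × Fin 2) (Fin 2 × Fin 2) ℂ) : Matrix Q3 Q3 ℂ :=
  fun p q => A (p.1, p.2.1) (q.1, q.2.1) * (if p.2.2 = q.2.2 then 1 else 0)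

noncomputable def bcFull (B : Matrix (Fin 2 × Fin 2) (Fin 2 × Fin 2) ℂ) : Matrix Q3 Q3 ℂ :=
  fun p q => (if p.1 = q.1 then 1 else 0) * B (p.2.1, p.2.2) (q.2.1, q.2.2)

lemma abFull_unitary {A : Matrix (Fin 2 × Fin 2) (Fin 2 × Fin 2) ℂ}
    (hA : A ∈ Matrix.unitaryGroup (Fin 2 × Fin 2) ℂ) :
    abFull A ∈ Matrix.unitaryGroup Q3 ℂ := by
  have hA' : star A * A = 1 := (Matrix.mem_unitaryGroup_iff').mp hA
  have key : ∀ r q : Fin 2 × Fin 2, (∑ p : Fin 2 × Fin 2, (starRingEnd ℂ) (A p r) * A p q)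
      = if r = q then 1 else 0 := by
    intro r q
    have := congrFun (congrFun hA' r) q
    rw [Matrix.mul_apply] at this
    simpa [Matrix.star_apply, Matrix.one_apply] using this
  rw [Matrix.mem_unitaryGroup_iff']
  ext ⟨a,b,c⟩ ⟨a',b',c'⟩
  rw [Matrix.mul_apply]
  have expand : ∀ x y z : Fin 2,
      (star (abFull A)) (a,b,c) (x,y,z) * (abFull A) (x,y,z) (a',b',c')
      = ((starRingEnd ℂ) (A (x,y) (a,b)) * A (x,y) (a',b')) *
        ((if z = c then 1 else 0) * (if z = c' then 1 else 0)) := by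
    intro x y z
    simp only [abFull, Matrix.star_apply, apply_ite (starRingEnd ℂ), map_mul, map_one, map_zero]
    split_ifs <;> simp_all <;> ring
  rw [Fintype.sum_prod_type]
  simp only [Fintype.sum_prod_type]
  calc (∑ x, ∑ y, ∑ z, (star (abFull A)) (a,b,c) (x,y,z) * (abFull A) (x,y,z) (a',b',c'))
      = ∑ x, ∑ y, ∑ z, ((starRingEnd ℂ) (A (x,y) (a,b)) * A (x,y) (a',b')) *
        ((if z = c then 1 else 0) * (if z = c' then 1 else 0)) := by
        refine Finset.sum_congr rfl fun x _ => Finset.sum_congr rfl fun y _ =>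
          Finset.sum_congr rfl fun z _ => expand x y z
    _ = (∑ x, ∑ y, ((starRingEnd ℂ) (A (x,y) (a,b)) * A (x,y) (a',b'))) *
        (∑ z, (if z = c then 1 else 0) * (if z = c' then 1 else 0)) := by
        rw [Finset.sum_mul]
        refine Finset.sum_congr rfl fun x _ => ?_
        rw [Finset.sum_mul]
        refine Finset.sum_congr rfl fun y _ => ?_
        rw [Finset.mul_sum]
    _ = (if ((a,b) : Fin 2 × Fin 2) = (a',b') then 1 else 0) *
        (if c = c' then 1 else 0) := by
        have hk := key (a,b) (a',b')
        rw [Fintype.sum_prod_type] at hk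
        rw [hk]
        congr 1
        fin_cases c <;> fin_cases c' <;> simp
    _ = (1 : Matrix Q3 Q3 ℂ) (a,b,c) (a',b',c') := by
        simp [Matrix.one_apply, Prod.ext_iff]
        split_ifs <;> tauto

lemma bcFull_unitary {B : Matrix (Fin 2 × Fin 2) (Fin 2 × Fin 2) ℂ}
    (hB : B ∈ Matrix.unitaryGroup (Fin 2 × Fin 2) ℂ) :
    bcFull B ∈ Matrix.unitaryGroup Q3 ℂ := by
  have hB' : star B * B = 1 := (Matrix.mem_unitaryGroup_iff').mp hB
  have key : ∀ r q : Fin 2 × Fin 2, (∑ p : Fin 2 × Fin 2, (starRingEnd ℂ) (B p r) * B p q)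
      = if r = q then 1 else 0 := by
    intro r q
    have := congrFun (congrFun hB' r) q
    rw [Matrix.mul_apply] at this
    simpa [Matrix.star_apply, Matrix.one_apply] using this
  rw [Matrix.mem_unitaryGroup_iff']
  ext ⟨a,b,c⟩ ⟨a',b',c'⟩
  rw [Matrix.mul_apply]
  have expand : ∀ x y z : Fin 2,
      (star (bcFull B)) (a,b,c) (x,y,z) * (bcFull B) (x,y,z) (a',b',c')
      = ((if x = a then 1 else 0) * (if x = a' then 1 else 0)) *
        ((starRingEnd ℂ) (B (y,z) (b,c)) * B (y,z) (b',c')) := by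
    intro x y z
    simp only [bcFull, Matrix.star_apply, apply_ite (starRingEnd ℂ), map_mul, map_one, map_zero]
    split_ifs <;> simp_all <;> ring
  rw [Fintype.sum_prod_type]
  simp only [Fintype.sum_prod_type]
  calc (∑ x, ∑ y, ∑ z, (star (bcFull B)) (a,b,c) (x,y,z) * (bcFull B) (x,y,z) (a',b',c'))
      = ∑ x, ∑ y, ∑ z, ((if x = a then 1 else 0) * (if x = a' then 1 else 0)) *
        ((starRingEnd ℂ) (B (y,z) (b,c)) * B (y,z) (b',c')) := by
        refine Finset.sum_congr rfl fun x _ => Finset.sum_congr rfl fun y _ =>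
          Finset.sum_congr rfl fun z _ => expand x y z
    _ = (∑ x : Fin 2, (if x = a then (1:ℂ) else 0) * (if x = a' then 1 else 0)) *
        (∑ y, ∑ z, ((starRingEnd ℂ) (B (y,z) (b,c)) * B (y,z) (b',c'))) := by
        rw [Finset.sum_mul]
        refine Finset.sum_congr rfl fun x _ => ?_
        rw [Finset.mul_sum]
        refine Finset.sum_congr rfl fun y _ => ?_
        rw [Finset.mul_sum]
    _ = (if a = a' then 1 else 0) *
        (if ((b,c) : Fin 2 × Fin 2) = (b',c') then 1 else 0) := by
        have hk := key (b,c) (b',c')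
        rw [Fintype.sum_prod_type] at hk
        rw [hk]
        congr 1
        fin_cases a <;> fin_cases a' <;> simp
    _ = (1 : Matrix Q3 Q3 ℂ) (a,b,c) (a',b',c') := by
        simp [Matrix.one_apply, Prod.ext_iff]
        split_ifs <;> tauto








/-- state with amplitude `z.re` on 000, `w.re` on 011, `z.im` on 100, `w.im` on 111 -/
noncomputable def stateOf (z w : ℂ) : Q3 → ℂ := fun p =>
  if p = (0,0,0) then (z.re : ℂ)
  else if p = (0,1,1) then (w.re : ℂ)
  else if p = (1,0,0) then (z.im : ℂ)
  else if p = (1,1,1) then (w.im : ℂ) else 0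

lemma abFull_mulVec (d₁ d₂ z w : ℂ) :
    (abFull (abMat d₁ d₂)).mulVec (stateOf z w) = stateOf (d₁ * z) (d₂ * w) := by
  funext p
  rw [Matrix.mulVec, dotProduct]
  rw [Fintype.sum_prod_type]
  simp only [Fintype.sum_prod_type, Fin.sum_univ_two]
  fin_cases p <;>
    simp [abFull, abMat, rotM, stateOf, Prod.ext_iff, Complex.ext_iff,
      Complex.mul_re, Complex.mul_im] <;> ring

lemma bcFull_mulVec (c s : ℝ) (z w : ℂ) :
    (bcFull (bcMat c s)).mulVec (stateOf z w) = stateOf (c * z - s * w) (s * z + c * w) := by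
  funext p
  rw [Matrix.mulVec, dotProduct]
  rw [Fintype.sum_prod_type]
  simp only [Fintype.sum_prod_type, Fin.sum_univ_two]
  fin_cases p <;>
    simp [bcFull, bcMat, stateOf, Prod.ext_iff, Complex.ext_iff,
      Complex.mul_re, Complex.mul_im, Complex.sub_re, Complex.sub_im,
      Complex.add_re, Complex.add_im] <;> ring



noncomputable section

def ss (Δ : ℝ) : ℝ := Δ/8
def cc (Δ : ℝ) : ℝ := Real.sqrt (1 - (Δ/8)^2)
def sg (Δ : ℝ) : ℝ := Real.sqrt (Δ/2)
def chh (Δ : ℝ) : ℝ := Real.sqrt (1 - Δ/2)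
def bOf (a : ℝ) : ℝ := Real.sqrt (1 - a^2)

def zAv (Δ a : ℝ) : ℂ := ⟨a * chh Δ, a * sg Δ⟩
def wAv (Δ a : ℝ) : ℂ := ⟨bOf a * sg Δ, bOf a * chh Δ⟩
def zBv (Δ a : ℝ) : ℂ := (cc Δ : ℝ) * zAv Δ a - (ss Δ : ℝ) * wAv Δ a
def wBv (Δ a : ℝ) : ℂ := (ss Δ : ℝ) * zAv Δ a + (cc Δ : ℝ) * wAv Δ a

def aa (Δ : ℝ) : ℕ → ℝ
  | 0 => 1
  | k+1 => ‖zBv Δ (aa Δ k)‖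

variable {Δ : ℝ}

lemma zBv_re (a : ℝ) : (zBv Δ a).re = cc Δ * (a * chh Δ) - ss Δ * (bOf a * sg Δ) := by
  simp [zBv, zAv, wAv, Complex.ofReal]
lemma zBv_im (a : ℝ) : (zBv Δ a).im = cc Δ * (a * sg Δ) - ss Δ * (bOf a * chh Δ) := by
  simp [zBv, zAv, wAv, Complex.ofReal]
lemma wBv_re (a : ℝ) : (wBv Δ a).re = ss Δ * (a * chh Δ) + cc Δ * (bOf a * sg Δ) := by
  simp [wBv, zAv, wAv, Complex.ofReal]
lemma wBv_im (a : ℝ) : (wBv Δ a).im = ss Δ * (a * sg Δ) + cc Δ * (bOf a * chh Δ) := by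
  simp [wBv, zAv, wAv, Complex.ofReal]

section params
lemma cc_nonneg : 0 ≤ cc Δ := Real.sqrt_nonneg _
lemma chh_nonneg : 0 ≤ chh Δ := Real.sqrt_nonneg _
variable (hΔ0 : 0 < Δ) (hΔ : Δ < 1/2)
include hΔ0 hΔ

lemma ss_pos : 0 < ss Δ := by unfold ss; linarith
lemma ss_lt : ss Δ < 1/16 := by unfold ss; linarith
lemma cc_sq : cc Δ ^ 2 = 1 - ss Δ ^2 := by
  unfold cc ss; rw [Real.sq_sqrt]; nlinarith
lemma cc_ge : 1/2 ≤ cc Δ := by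
  have h1 := cc_sq hΔ0 hΔ
  have h2 := cc_nonneg (Δ := Δ)
  have h3 := ss_lt hΔ0 hΔ
  have h4 := ss_pos hΔ0 hΔ
  nlinarith
lemma cc_le : cc Δ ≤ 1 := by
  have h1 := cc_sq hΔ0 hΔ
  have h2 := cc_nonneg (Δ := Δ)
  have h4 := ss_pos hΔ0 hΔ
  nlinarith
lemma sg_sq : sg Δ ^ 2 = Δ/2 := by unfold sg; rw [Real.sq_sqrt]; linarith
lemma sg_pos : 0 < sg Δ := by unfold sg; positivity
lemma sg_lt : sg Δ < 1/2 := by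
  have h1 := sg_sq hΔ0 hΔ
  have h2 := sg_pos hΔ0 hΔ
  nlinarith
lemma chh_sq : chh Δ ^ 2 = 1 - Δ/2 := by unfold chh; rw [Real.sq_sqrt] <;> linarith
lemma chh_ge : 1/2 ≤ chh Δ := by
  have h1 := chh_sq hΔ0 hΔ
  have h2 := chh_nonneg (Δ := Δ)
  nlinarith
lemma chh_le : chh Δ ≤ 1 := by
  have h1 := chh_sq hΔ0 hΔ
  have h2 := chh_nonneg (Δ := Δ)
  nlinarith
end params

lemma bOf_nonneg (a : ℝ) : 0 ≤ bOf a := Real.sqrt_nonneg _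
lemma bOf_sq {a : ℝ} (h0 : -1 ≤ a) (h1 : a ≤ 1) : bOf a ^ 2 = 1 - a^2 := by
  unfold bOf; rw [Real.sq_sqrt]; nlinarith

/-- the square of the norm recursion -/
lemma zBv_abs_sq (a : ℝ) :
    ‖zBv Δ a‖ ^ 2 = (zBv Δ a).re ^2 + (zBv Δ a).im ^2 := by
  rw [Complex.sq_norm, Complex.normSq_apply]; ring

section seq
variable (hΔ0 : 0 < Δ) (hΔ : Δ < 1/2)
include hΔ0 hΔ

/-- SOS identity -/
lemma sos_id (a : ℝ) (h0 : -1 ≤ a) (h1 : a ≤ 1) :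
    (cc Δ * (a * chh Δ) - ss Δ * (bOf a * sg Δ))^2
      + (cc Δ * (a * sg Δ) - ss Δ * (bOf a * chh Δ))^2
    = cc Δ ^2 * a ^2 + ss Δ ^2 * (1 - a ^2)
      - 4 * cc Δ * ss Δ * sg Δ * chh Δ * a * bOf a := by
  have hb := bOf_sq h0 h1
  have hh := chh_sq hΔ0 hΔ
  have hg := sg_sq hΔ0 hΔ
  linear_combination (cc Δ^2 * a^2 + ss Δ^2 * bOf a^2) * hh
    + (cc Δ^2 * a^2 + ss Δ^2 * bOf a^2) * hg + ss Δ^2 * hb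

/-- algebraic form of the recursion -/
lemma aa_succ_sq (k : ℕ) (h0 : 0 ≤ aa Δ k) (h1 : aa Δ k ≤ 1) :
    aa Δ (k+1) ^ 2 = cc Δ ^2 * aa Δ k ^2 + ss Δ ^2 * (1 - aa Δ k ^2)
      - 4 * cc Δ * ss Δ * sg Δ * chh Δ * aa Δ k * bOf (aa Δ k) := by
  show ‖zBv Δ (aa Δ k)‖ ^ 2 = _
  rw [zBv_abs_sq, zBv_re, zBv_im]
  exact sos_id hΔ0 hΔ _ (by linarith) h1

lemma aa_pos_le : ∀ k, (0 < aa Δ k ∧ aa Δ k ≤ 1) := by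
  intro k
  induction k with
  | zero => norm_num [aa]
  | succ k ih =>
    obtain ⟨h0, h1⟩ := ih
    have hrec := aa_succ_sq hΔ0 hΔ k (le_of_lt h0) h1
    have hb0 := bOf_nonneg (aa Δ k)
    have hb := bOf_sq (a := aa Δ k) (by linarith) h1
    have hcs := cc_sq hΔ0 hΔ
    have hcg := cc_ge hΔ0 hΔ
    have hsg := sg_pos hΔ0 hΔ
    have hsl := sg_lt hΔ0 hΔ
    have hch := chh_ge hΔ0 hΔ
    have hchl := chh_le hΔ0 hΔ
    have hsp := ss_pos hΔ0 hΔ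
    have hsl2 := ss_lt hΔ0 hΔ
    have habs : 0 ≤ aa Δ (k+1) := norm_nonneg _
    have hcross : 0 ≤ 4 * cc Δ * ss Δ * sg Δ * chh Δ * aa Δ k * bOf (aa Δ k) :=
      mul_nonneg (mul_nonneg (mul_nonneg (mul_nonneg (mul_nonneg
        (by linarith : (0:ℝ) ≤ 4 * cc Δ) hsp.le) hsg.le) (chh_nonneg)) h0.le) hb0
    constructor
    · rcases eq_or_lt_of_le habs with h' | h'
      · exfalso
        have hsq : aa Δ (k+1)^2 = 0 := by rw [← h']; ring
        rw [hrec] at hsq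
        rw [← sos_id hΔ0 hΔ (aa Δ k) (by linarith) h1] at hsq
        set X := cc Δ * (aa Δ k * chh Δ) - ss Δ * (bOf (aa Δ k) * sg Δ) with hX
        set Y := cc Δ * (aa Δ k * sg Δ) - ss Δ * (bOf (aa Δ k) * chh Δ) with hY
        have hX2 : X^2 = 0 := by nlinarith [sq_nonneg X, sq_nonneg Y]
        have hY2 : Y^2 = 0 := by nlinarith [sq_nonneg X, sq_nonneg Y]
        have hX0 : X = 0 := by
          have := sq_eq_zero_iff.mp hX2; exact this
        have hY0 : Y = 0 := by
          have := sq_eq_zero_iff.mp hY2; exact this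
        have e3 : cc Δ * aa Δ k * (chh Δ^2 - sg Δ^2) = 0 := by
          linear_combination chh Δ * hX0 - sg Δ * hY0
        have hh := chh_sq hΔ0 hΔ
        have hg := sg_sq hΔ0 hΔ
        have hpos : 0 < cc Δ * aa Δ k * (chh Δ^2 - sg Δ^2) := by
          apply mul_pos (mul_pos (by linarith) h0); nlinarith
        linarith [e3, hpos]
      · exact h'
    · have h2 : aa Δ (k+1)^2 ≤ cc Δ^2 := by
        rw [hrec]
        have g1 : (0:ℝ) ≤ cc Δ^2 - ss Δ^2 := by nlinarith
        have g2 : (0:ℝ) ≤ 1 - aa Δ k^2 := by nlinarith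
        nlinarith [hcross, mul_nonneg g1 g2]
      nlinarith [habs, h2, hcg]

/-- strict decrease while `aa k ^ 2 > Δ/2` -/
lemma aa_decrease (k : ℕ) (hk : Δ/2 < aa Δ k ^2) :
    aa Δ (k+1) ^2 ≤ aa Δ k ^2 - Δ^2/128 := by
  obtain ⟨h0, h1⟩ := aa_pos_le hΔ0 hΔ k
  have hrec := aa_succ_sq hΔ0 hΔ k h0.le h1
  have hb0 := bOf_nonneg (aa Δ k)
  have hb := bOf_sq (a := aa Δ k) (by linarith) h1
  have hcs := cc_sq hΔ0 hΔ
  have hcg := cc_ge hΔ0 hΔ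
  have hsgsq := sg_sq hΔ0 hΔ
  have hsg := sg_pos hΔ0 hΔ
  have hch := chh_ge hΔ0 hΔ
  have hchl := chh_le hΔ0 hΔ
  have hsp := ss_pos hΔ0 hΔ
  have hssv : ss Δ = Δ/8 := rfl
  rcases le_or_gt (3/4 : ℝ) (aa Δ k ^2) with hcase | hcase
  · -- a² ≥ 3/4 : the -ss²(2a²-1) term dominates
    have hcross : 0 ≤ 4 * cc Δ * ss Δ * sg Δ * chh Δ * aa Δ k * bOf (aa Δ k) :=
      mul_nonneg (mul_nonneg (mul_nonneg (mul_nonneg (mul_nonneg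
        (by linarith : (0:ℝ) ≤ 4 * cc Δ) hsp.le) hsg.le) (chh_nonneg)) h0.le) hb0
    rw [hrec]
    nlinarith [hcross]
  · -- Δ/2 < a² < 3/4 : the cross term dominates
    have hbge : (1/2:ℝ) ≤ bOf (aa Δ k) := by nlinarith [hb, hb0]
    have hage : sg Δ ≤ aa Δ k := by nlinarith [hsgsq, hsg, h0]
    -- 4 cc ss sg chh a b ≥ 4*(1/2)*ss*sg*(1/2)*sg*(1/2) = ss*sg²/2 = ss*Δ/4
    have hchn : (0:ℝ) ≤ chh Δ := chh_nonneg
    have A1 : (0:ℝ) ≤ cc Δ * sg Δ := mul_nonneg (by linarith) hsg.le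
    have A2 : (0:ℝ) ≤ cc Δ * sg Δ * chh Δ := mul_nonneg A1 hchn
    have A3 : (0:ℝ) ≤ cc Δ * sg Δ * chh Δ * aa Δ k := mul_nonneg A2 h0.le
    have b1 : (1/2) * sg Δ ≤ cc Δ * sg Δ := mul_le_mul_of_nonneg_right hcg hsg.le
    have b2 : (1/2) * sg Δ * (1/2) ≤ cc Δ * sg Δ * chh Δ := by
      calc (1/2) * sg Δ * (1/2) ≤ cc Δ * sg Δ * (1/2) :=
            mul_le_mul_of_nonneg_right b1 (by norm_num)
        _ ≤ cc Δ * sg Δ * chh Δ := mul_le_mul_of_nonneg_left hch A1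
    have b3 : (1/2) * sg Δ * (1/2) * sg Δ ≤ cc Δ * sg Δ * chh Δ * aa Δ k := by
      calc (1/2) * sg Δ * (1/2) * sg Δ ≤ cc Δ * sg Δ * chh Δ * sg Δ :=
            mul_le_mul_of_nonneg_right b2 hsg.le
        _ ≤ cc Δ * sg Δ * chh Δ * aa Δ k := mul_le_mul_of_nonneg_left hage A2
    have b4 : (1/2) * sg Δ * (1/2) * sg Δ * (1/2)
        ≤ cc Δ * sg Δ * chh Δ * aa Δ k * bOf (aa Δ k) := by
      calc (1/2) * sg Δ * (1/2) * sg Δ * (1/2) ≤ cc Δ * sg Δ * chh Δ * aa Δ k * (1/2) :=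
            mul_le_mul_of_nonneg_right b3 (by norm_num)
        _ ≤ cc Δ * sg Δ * chh Δ * aa Δ k * bOf (aa Δ k) :=
            mul_le_mul_of_nonneg_left hbge A3
    have b5 := mul_le_mul_of_nonneg_left b4 (by linarith : (0:ℝ) ≤ 4 * ss Δ)
    have b6 : ss Δ * sg Δ^2 = ss Δ * (Δ/2) := by rw [hsgsq]
    have hcr : ss Δ * Δ/4 ≤ 4 * cc Δ * ss Δ * sg Δ * chh Δ * aa Δ k * bOf (aa Δ k) := by
      nlinarith [b5, b6]
    rw [hrec]
    -- goal: cc²a² + ss²(1-a²) - cross ≤ a² - Δ²/128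
    -- i.e. -ss²(2a²-1) - cross ≤ -Δ²/128 ;  -ss²(2a²-1) ≤ ss² = Δ²/64, cross ≥ ssΔ/4 = Δ²/32
    nlinarith [hcr, sq_nonneg (aa Δ k)]

/-- there is a step where `aa k ^2` drops to `Δ/2` -/
lemma exists_small : ∃ k, aa Δ k ^2 ≤ Δ/2 := by
  by_contra hcon
  push_neg at hcon
  -- then for all k : aa k^2 ≤ 1 - k * Δ²/128
  have key : ∀ k : ℕ, aa Δ k ^2 ≤ 1 - k * (Δ^2/128) := by
    intro k
    induction k with
    | zero => simp [aa]
    | succ k ih =>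
      have := aa_decrease hΔ0 hΔ k (hcon k)
      push_cast
      push_cast at ih
      linarith
  obtain ⟨n, hn⟩ := exists_nat_gt (128 / Δ^2)
  have hkey := key n
  have hpos : (0:ℝ) < Δ^2/128 := by positivity
  have : (128:ℝ)/Δ^2 * (Δ^2/128) < n * (Δ^2/128) := by
    apply mul_lt_mul_of_pos_right hn hpos
  have h128 : (128:ℝ)/Δ^2 * (Δ^2/128) = 1 := by field_simp
  nlinarith [hcon n, sq_nonneg (aa Δ n)]

lemma hcs' : cc Δ^2 + ss Δ^2 = 1 := by have := cc_sq hΔ0 hΔ; linarith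
lemma hhg : chh Δ^2 + sg Δ^2 = 1 := by
  have := chh_sq hΔ0 hΔ; have := sg_sq hΔ0 hΔ; linarith

lemma normSq_zBv (a : ℝ) (h0 : -1 ≤ a) (h1 : a ≤ 1) :
    Complex.normSq (zBv Δ a) + Complex.normSq (wBv Δ a) = 1 := by
  have hb := bOf_sq h0 h1
  have h1' := hcs' hΔ0 hΔ
  have h2' := hhg hΔ0 hΔ
  rw [Complex.normSq_apply, Complex.normSq_apply, zBv_re, zBv_im, wBv_re, wBv_im]
  linear_combination ((chh Δ^2 + sg Δ^2)*(a^2 + bOf a^2)) * h1' + (a^2 + bOf a^2) * h2' + hb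

lemma abs_zAv (a : ℝ) (ha : 0 ≤ a) : ‖zAv Δ a‖ = a := by
  have h2' := hhg hΔ0 hΔ
  rw [Complex.norm_def, Complex.normSq_apply]
  have : (zAv Δ a).re * (zAv Δ a).re + (zAv Δ a).im * (zAv Δ a).im = a^2 := by
    simp only [zAv]
    linear_combination a^2 * h2'
  rw [this, Real.sqrt_sq ha]

lemma abs_wAv (a : ℝ) : ‖wAv Δ a‖ = bOf a := by
  have h2' := hhg hΔ0 hΔ
  rw [Complex.norm_def, Complex.normSq_apply]
  have : (wAv Δ a).re * (wAv Δ a).re + (wAv Δ a).im * (wAv Δ a).im = bOf a^2 := by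
    simp only [wAv]
    linear_combination bOf a^2 * h2'
  rw [this, Real.sqrt_sq (bOf_nonneg a)]

omit hΔ0 hΔ in
lemma abs_zBv_aa (k : ℕ) : ‖zBv Δ (aa Δ k)‖ = aa Δ (k+1) := rfl

lemma normSq_wBv_aa (k : ℕ) :
    Complex.normSq (wBv Δ (aa Δ k)) = 1 - aa Δ (k+1)^2 := by
  obtain ⟨h0, h1⟩ := aa_pos_le hΔ0 hΔ k
  have := normSq_zBv hΔ0 hΔ (aa Δ k) (by linarith) h1
  have h2 : Complex.normSq (zBv Δ (aa Δ k)) = aa Δ (k+1)^2 := by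
    rw [← abs_zBv_aa (Δ := Δ) k, Complex.sq_norm]
  linarith

lemma abs_wBv_aa (k : ℕ) : ‖wBv Δ (aa Δ k)‖ = bOf (aa Δ (k+1)) := by
  rw [Complex.norm_def, normSq_wBv_aa hΔ0 hΔ]; rfl

lemma aa_lt_one (k : ℕ) : aa Δ (k+1) < 1 := by
  obtain ⟨h0, h1⟩ := aa_pos_le hΔ0 hΔ k
  have hrec := aa_succ_sq hΔ0 hΔ k h0.le h1
  have hb0 := bOf_nonneg (aa Δ k)
  have hb := bOf_sq (a := aa Δ k) (by linarith) h1
  have hcs := cc_sq hΔ0 hΔ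
  have hcg := cc_ge hΔ0 hΔ
  have hsg := sg_pos hΔ0 hΔ
  have hsp := ss_pos hΔ0 hΔ
  have hsl2 := ss_lt hΔ0 hΔ
  have habs : 0 ≤ aa Δ (k+1) := norm_nonneg _
  have hcross : 0 ≤ 4 * cc Δ * ss Δ * sg Δ * chh Δ * aa Δ k * bOf (aa Δ k) :=
    mul_nonneg (mul_nonneg (mul_nonneg (mul_nonneg (mul_nonneg
      (by linarith : (0:ℝ) ≤ 4 * cc Δ) hsp.le) hsg.le) (chh_nonneg)) h0.le) hb0
  have g2 : (0:ℝ) ≤ 1 - aa Δ k^2 := by nlinarith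
  have g1 : (0:ℝ) ≤ cc Δ^2 - ss Δ^2 := by nlinarith
  have h2 : aa Δ (k+1)^2 ≤ cc Δ^2 := by nlinarith [hcross, mul_nonneg g1 g2]
  have h3 : cc Δ^2 < 1 := by nlinarith
  nlinarith [habs, h2, h3]

lemma bOf_aa_pos (k : ℕ) : 0 < bOf (aa Δ (k+1)) := by
  have h1 := aa_lt_one hΔ0 hΔ k
  have h0 := (aa_pos_le hΔ0 hΔ (k+1)).1
  have : 0 < 1 - aa Δ (k+1)^2 := by nlinarith
  exact Real.sqrt_pos.mpr this

/-- junk at tilted milestones -/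
lemma junk_A (k : ℕ) :
    1 - (zAv Δ (aa Δ k)).re^2 - (wAv Δ (aa Δ k)).im^2 ≤ Δ := by
  obtain ⟨h0, h1⟩ := aa_pos_le hΔ0 hΔ k
  have hb := bOf_sq (a := aa Δ k) (by linarith) h1
  have hh := chh_sq hΔ0 hΔ
  simp only [zAv, wAv]
  nlinarith [hh, hb]

/-- junk after the rotation step -/
lemma junk_B (k : ℕ) :
    1 - (zBv Δ (aa Δ k)).re^2 - (wBv Δ (aa Δ k)).im^2 ≤ Δ := by
  obtain ⟨h0, h1⟩ := aa_pos_le hΔ0 hΔ k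
  have hb := bOf_sq (a := aa Δ k) (by linarith) h1
  have hnorm := normSq_zBv hΔ0 hΔ (aa Δ k) (by linarith) h1
  rw [Complex.normSq_apply, Complex.normSq_apply] at hnorm
  have hid : (zBv Δ (aa Δ k)).im^2 + (wBv Δ (aa Δ k)).re^2
      = cc Δ^2 * sg Δ^2 + ss Δ^2 * chh Δ^2 := by
    rw [zBv_im, wBv_re]
    linear_combination (cc Δ^2*sg Δ^2 + ss Δ^2*chh Δ^2) * hb
  have hsgsq := sg_sq hΔ0 hΔ
  have hchl := chh_le hΔ0 hΔ
  have hchn : (0:ℝ) ≤ chh Δ := chh_nonneg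
  have hcl := cc_le hΔ0 hΔ
  have hcn : (0:ℝ) ≤ cc Δ := cc_nonneg
  have hssv : ss Δ = Δ/8 := rfl
  ring_nf at hnorm
  have e : 1 - (zBv Δ (aa Δ k)).re^2 - (wBv Δ (aa Δ k)).im^2
      = (zBv Δ (aa Δ k)).im^2 + (wBv Δ (aa Δ k)).re^2 := by linarith [hnorm]
  rw [e, hid]
  have m1 : (0:ℝ) ≤ (1 - cc Δ^2) * sg Δ^2 := by
    apply mul_nonneg _ (sq_nonneg _); nlinarith
  have m2 : (0:ℝ) ≤ (1 - chh Δ^2) * ss Δ^2 := by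
    apply mul_nonneg _ (sq_nonneg _); nlinarith
  nlinarith [m1, m2]
end seq
noncomputable def ratioC (z z' : ℂ) : ℂ := if z = 0 then 1 else z'/z

lemma ratioC_mul {z z' : ℂ} (h : z = 0 → z' = 0) : ratioC z z' * z = z' := by
  unfold ratioC
  by_cases hz : z = 0
  · simp [hz, h hz]
  · rw [if_neg hz]; field_simp

lemma ratioC_abs {z z' : ℂ} (h : ‖z‖ = ‖z'‖) :
    ‖ratioC z z'‖ = 1 := by
  unfold ratioC
  by_cases hz : z = 0
  · simp [hz]
  · rw [if_neg hz, norm_div, ← h, div_self]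
    exact (norm_ne_zero_iff).mpr hz

/-- the trajectory: first components -/
noncomputable def vz (Δ : ℝ) (K : ℕ) (i : ℕ) : ℂ :=
  if i = 0 then 1
  else if i ≤ 2*K then
    (if i % 2 = 1 then zAv Δ (aa Δ ((i-1)/2)) else zBv Δ (aa Δ ((i-2)/2)))
  else if i = 2*K+1 then Complex.I * (aa Δ K : ℝ)
  else 0

noncomputable def vw (Δ : ℝ) (K : ℕ) (i : ℕ) : ℂ :=
  if i = 0 then 0
  else if i ≤ 2*K then
    (if i % 2 = 1 then wAv Δ (aa Δ ((i-1)/2)) else wBv Δ (aa Δ ((i-2)/2)))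
  else if i = 2*K+1 then Complex.I * (bOf (aa Δ K) : ℝ)
  else Complex.I

section evalvz
variable {Δ : ℝ} {K : ℕ}

lemma vz_zero : vz Δ K 0 = 1 := by simp [vz]
lemma vw_zero : vw Δ K 0 = 0 := by simp [vw]
lemma vz_odd {k : ℕ} (h : k < K) : vz Δ K (2*k+1) = zAv Δ (aa Δ k) := by
  unfold vz
  rw [if_neg (by omega), if_pos (by omega), if_pos (by omega),
    (by omega : (2*k+1-1)/2 = k)]
lemma vw_odd {k : ℕ} (h : k < K) : vw Δ K (2*k+1) = wAv Δ (aa Δ k) := by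
  unfold vw
  rw [if_neg (by omega), if_pos (by omega), if_pos (by omega),
    (by omega : (2*k+1-1)/2 = k)]
lemma vz_even {k : ℕ} (h1 : 1 ≤ k) (h2 : k ≤ K) : vz Δ K (2*k) = zBv Δ (aa Δ (k-1)) := by
  unfold vz
  rw [if_neg (by omega), if_pos (by omega), if_neg (by omega),
    (by omega : (2*k-2)/2 = k-1)]
lemma vw_even {k : ℕ} (h1 : 1 ≤ k) (h2 : k ≤ K) : vw Δ K (2*k) = wBv Δ (aa Δ (k-1)) := by
  unfold vw
  rw [if_neg (by omega), if_pos (by omega), if_neg (by omega),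
    (by omega : (2*k-2)/2 = k-1)]
lemma vz_last1 : vz Δ K (2*K+1) = Complex.I * (aa Δ K : ℝ) := by
  unfold vz
  rw [if_neg (by omega), if_neg (by omega), if_pos rfl]
lemma vw_last1 : vw Δ K (2*K+1) = Complex.I * (bOf (aa Δ K) : ℝ) := by
  unfold vw
  rw [if_neg (by omega), if_neg (by omega), if_pos rfl]
lemma vz_last2 : vz Δ K (2*K+2) = 0 := by
  unfold vz
  rw [if_neg (by omega), if_neg (by omega), if_neg (by omega)]
lemma vw_last2 : vw Δ K (2*K+2) = Complex.I := by
  unfold vw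
  rw [if_neg (by omega), if_neg (by omega), if_neg (by omega)]
end evalvz

noncomputable def Ugate (Δ : ℝ) (K : ℕ) (t : ℕ) : Matrix Q3 Q3 ℂ :=
  if t % 2 = 0 then
    abFull (abMat (ratioC (vz Δ K t) (vz Δ K (t+1))) (ratioC (vw Δ K t) (vw Δ K (t+1))))
  else if t = 2*K+1 then bcFull (bcMat (bOf (aa Δ K)) (aa Δ K))
  else bcFull (bcMat (cc Δ) (ss Δ))
lemma bOf_one : bOf 1 = 0 := by unfold bOf; norm_num
lemma wAv_one {Δ : ℝ} : wAv Δ 1 = 0 := by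
  apply Complex.ext <;> simp [wAv, bOf_one]
lemma aa_zero {Δ : ℝ} : aa Δ 0 = 1 := rfl

lemma stateOf_one_zero : stateOf 1 0 = basisState3 (0,0,0) := by
  funext p
  unfold stateOf basisState3
  rcases p with ⟨a,b,c⟩
  fin_cases a <;> fin_cases b <;> fin_cases c <;> simp [Pi.single_apply, Prod.ext_iff]
lemma stateOf_zero_I : stateOf 0 Complex.I = basisState3 (1,1,1) := by
  funext p
  unfold stateOf basisState3
  rcases p with ⟨a,b,c⟩
  fin_cases a <;> fin_cases b <;> fin_cases c <;> simp [Pi.single_apply, Prod.ext_iff]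

section evolve
variable {Δ : ℝ} (hΔ0 : 0 < Δ) (hΔ : Δ < 1/2)
include hΔ0 hΔ

lemma zBv_ne {k : ℕ} : zBv Δ (aa Δ k) ≠ 0 := by
  intro h0
  have := abs_zBv_aa (Δ := Δ) k
  rw [h0] at this
  simp at this
  have := (aa_pos_le hΔ0 hΔ (k+1)).1
  linarith [this]

lemma wBv_ne {k : ℕ} : wBv Δ (aa Δ k) ≠ 0 := by
  intro h0
  have := abs_wBv_aa hΔ0 hΔ (Δ := Δ) k
  rw [h0] at this
  simp at this
  have := bOf_aa_pos hΔ0 hΔ (Δ := Δ) k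
  linarith [this]

lemma evolve {K : ℕ} (hK : 1 ≤ K) :
    ∀ i, i ≤ 2*K+2 →
      applySeq (Ugate Δ K) (basisState3 (0,0,0)) i = stateOf (vz Δ K i) (vw Δ K i) := by
  intro i
  induction i with
  | zero =>
    intro _
    rw [vz_zero, vw_zero, stateOf_one_zero]
    rfl
  | succ i ih =>
    intro hi
    have ih' := ih (by omega)
    show (Ugate Δ K i).mulVec (applySeq (Ugate Δ K) (basisState3 (0,0,0)) i) = _
    rw [ih']
    rcases Nat.even_or_odd i with he | ho
    · -- D gate
      have hpar : i % 2 = 0 := Nat.even_iff.mp he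
      obtain ⟨k, rfl⟩ : ∃ k, i = 2*k := ⟨i/2, by omega⟩
      have hkK : k ≤ K := by omega
      rw [Ugate, if_pos hpar, abFull_mulVec]
      have hz : vz Δ K (2*k) = 0 → vz Δ K (2*k+1) = 0 := by
        rcases Nat.eq_zero_or_pos k with rfl | hk1
        · intro h0; rw [vz_zero] at h0; exact absurd h0 one_ne_zero
        · intro h0; rw [vz_even hk1 hkK] at h0
          exact absurd h0 (zBv_ne hΔ0 hΔ)
      have hw : vw Δ K (2*k) = 0 → vw Δ K (2*k+1) = 0 := by
        rcases Nat.eq_zero_or_pos k with rfl | hk1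
        · intro _
          have h01 : (0:ℕ) < K := hK
          rw [show 2*0+1 = 2*0+1 from rfl, vw_odd h01]
          rw [show aa Δ 0 = 1 from rfl, wAv_one]
        · intro h0; rw [vw_even hk1 hkK] at h0
          exact absurd h0 (wBv_ne hΔ0 hΔ)
      rw [ratioC_mul hz, ratioC_mul hw]
    · -- X gate
      have hpar : i % 2 = 1 := Nat.odd_iff.mp ho
      obtain ⟨k, rfl⟩ : ∃ k, i = 2*k+1 := ⟨i/2, by omega⟩
      have hkK : k ≤ K := by omega
      rcases lt_or_eq_of_le hkK with hlt | rfl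
      · rw [Ugate, if_neg (by omega), if_neg (by omega), bcFull_mulVec]
        rw [vz_odd hlt, vw_odd hlt]
        rw [show 2*k+1+1 = 2*(k+1) from by ring]
        rw [vz_even (by omega) (by omega), vw_even (by omega) (by omega)]
        rw [show k+1-1 = k from rfl]
        rfl
      · rw [Ugate, if_neg (by omega), if_pos rfl, bcFull_mulVec]
        rw [vz_last1, vw_last1]
        rw [show 2*k+1+1 = 2*k+2 from rfl, vz_last2, vw_last2]
        have h1 := (aa_pos_le hΔ0 hΔ k).2
        have h0 := (aa_pos_le hΔ0 hΔ k).1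
        have hc : (aa Δ k)^2 + (bOf (aa Δ k))^2 = 1 := by
          have := bOf_sq (a := aa Δ k) (by linarith) h1
          linarith
        have hcC : ((aa Δ k : ℂ))^2 + ((bOf (aa Δ k) : ℂ))^2 = 1 := by
          exact_mod_cast congrArg (Complex.ofReal) hc
        rw [show ((bOf (aa Δ k) : ℝ) : ℂ) * (Complex.I * ((aa Δ k : ℝ) : ℂ))
              - ((aa Δ k : ℝ) : ℂ) * (Complex.I * ((bOf (aa Δ k) : ℝ) : ℂ)) = 0 from by ring,
          show ((aa Δ k : ℝ) : ℂ) * (Complex.I * ((aa Δ k : ℝ) : ℂ))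
              + ((bOf (aa Δ k) : ℝ) : ℂ) * (Complex.I * ((bOf (aa Δ k) : ℝ) : ℂ)) = Complex.I
            from by linear_combination Complex.I * hcC]
end evolve
section final
variable {Δ : ℝ} (hΔ0 : 0 < Δ) (hΔ : Δ < 1/2)
include hΔ0 hΔ

lemma abs_vz_match {K : ℕ} (hK : 1 ≤ K) (k : ℕ) (hk : k ≤ K) :
    ‖vz Δ K (2*k)‖ = ‖vz Δ K (2*k+1)‖ ∧
    ‖vw Δ K (2*k)‖ = ‖vw Δ K (2*k+1)‖ := by
  have h0K := (aa_pos_le hΔ0 hΔ k).1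
  rcases Nat.eq_zero_or_pos k with rfl | hk1
  · rw [show 2*0 = 0 from rfl, vz_zero, vw_zero, vz_odd hK, vw_odd hK,
      abs_zAv hΔ0 hΔ _ h0K.le, abs_wAv hΔ0 hΔ,
      show aa Δ 0 = 1 from rfl, bOf_one]
    constructor <;> simp
  · rw [vz_even hk1 hk, vw_even hk1 hk]
    have hz := abs_zBv_aa (Δ := Δ) (k-1)
    have hw := abs_wBv_aa hΔ0 hΔ (Δ := Δ) (k-1)
    rw [show k-1+1 = k from by omega] at hz hw
    rcases lt_or_eq_of_le hk with hlt | rfl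
    · rw [vz_odd hlt, vw_odd hlt, hz, hw,
        abs_zAv hΔ0 hΔ _ h0K.le, abs_wAv hΔ0 hΔ]
      exact ⟨rfl, rfl⟩
    · rw [vz_last1, vw_last1, hz, hw]
      constructor <;>
        simp [norm_mul, Complex.norm_real, Real.norm_eq_abs, abs_of_nonneg h0K.le,
          abs_of_nonneg (bOf_nonneg (aa Δ k))]

lemma Ugate_props {K : ℕ} (hK : 1 ≤ K) (t : ℕ) (ht : t < 2*K+2) :
    (Ugate Δ K t ∈ Matrix.unitaryGroup Q3 ℂ) ∧
    ((∃ A ∈ Matrix.unitaryGroup (Fin 2 × Fin 2) ℂ, ∀ a b c a' b' c',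
        Ugate Δ K t (a, b, c) (a', b', c') = A (a, b) (a', b') * (if c = c' then 1 else 0)) ∨
     (∃ A ∈ Matrix.unitaryGroup (Fin 2 × Fin 2) ℂ, ∀ a b c a' b' c',
        Ugate Δ K t (a, b, c) (a', b', c') = (if a = a' then 1 else 0) * A (b, c) (b', c'))) := by
  rcases Nat.even_or_odd t with he | ho
  · have hpar : t % 2 = 0 := Nat.even_iff.mp he
    obtain ⟨k, rfl⟩ : ∃ k, t = 2*k := ⟨t/2, by omega⟩
    have hkK : k ≤ K := by omega
    obtain ⟨h1, h2⟩ := abs_vz_match hΔ0 hΔ hK k hkK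
    have hd1 := ratioC_abs h1
    have hd2 := ratioC_abs h2
    have hmem := abMat_unitary hd1 hd2
    have hU : Ugate Δ K (2*k) = abFull (abMat
        (ratioC (vz Δ K (2*k)) (vz Δ K (2*k+1))) (ratioC (vw Δ K (2*k)) (vw Δ K (2*k+1)))) := by
      rw [Ugate, if_pos hpar]
    exact ⟨by rw [hU]; exact abFull_unitary hmem,
      Or.inl ⟨_, hmem, fun a b c a' b' c' => by rw [hU]; rfl⟩⟩
  · have hpar : t % 2 = 1 := Nat.odd_iff.mp ho
    obtain ⟨k, rfl⟩ : ∃ k, t = 2*k+1 := ⟨t/2, by omega⟩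
    rcases eq_or_ne (2*k+1) (2*K+1) with heq | hne
    · have h1 := (aa_pos_le hΔ0 hΔ K).2
      have hmem := bcMat_unitary (c := bOf (aa Δ K)) (s := aa Δ K)
        (by have := bOf_sq (a := aa Δ K) (by linarith [(aa_pos_le hΔ0 hΔ K).1]) h1; linarith)
      have hU : Ugate Δ K (2*k+1) = bcFull (bcMat (bOf (aa Δ K)) (aa Δ K)) := by
        rw [Ugate, if_neg (by omega), if_pos heq]
      exact ⟨by rw [hU]; exact bcFull_unitary hmem,
        Or.inr ⟨_, hmem, fun a b c a' b' c' => by rw [hU]; rfl⟩⟩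
    · have hmem := bcMat_unitary (c := cc Δ) (s := ss Δ) (hcs' hΔ0 hΔ)
      have hU : Ugate Δ K (2*k+1) = bcFull (bcMat (cc Δ) (ss Δ)) := by
        rw [Ugate, if_neg (by omega), if_neg hne]
      exact ⟨by rw [hU]; exact bcFull_unitary hmem,
        Or.inr ⟨_, hmem, fun a b c a' b' c' => by rw [hU]; rfl⟩⟩

lemma junk_eval (z w : ℂ) :
    1 - ‖stateOf z w (0,0,0)‖^2 - ‖stateOf z w (1,1,1)‖^2
      = 1 - z.re^2 - w.im^2 := by
  have e1 : stateOf z w (0,0,0) = (z.re : ℂ) := by simp [stateOf]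
  have e2 : stateOf z w (1,1,1) = (w.im : ℂ) := by simp [stateOf, Prod.ext_iff]
  rw [e1, e2, Complex.norm_real, Complex.norm_real, Real.norm_eq_abs, Real.norm_eq_abs, sq_abs, sq_abs]
end final

theorem traversal_lemma_tight' :
    ∃ C : ℝ, 0 < C ∧ ∀ Δ : ℝ, 0 < Δ → Δ < 1 / 2 →
      ∃ m : ℕ, (m : ℝ) ≤ C / Δ ^ 2 ∧
      ∃ U : ℕ → Matrix (Fin 2 × Fin 2 × Fin 2) (Fin 2 × Fin 2 × Fin 2) ℂ,
        (∀ t < m, U t ∈ Matrix.unitaryGroup (Fin 2 × Fin 2 × Fin 2) ℂ) ∧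
        (∀ t < m,
          (∃ A ∈ Matrix.unitaryGroup (Fin 2 × Fin 2) ℂ, ∀ a b c a' b' c',
              U t (a, b, c) (a', b', c') = A (a, b) (a', b') * (if c = c' then 1 else 0)) ∨
          (∃ A ∈ Matrix.unitaryGroup (Fin 2 × Fin 2) ℂ, ∀ a b c a' b' c',
              U t (a, b, c) (a', b', c') = (if a = a' then 1 else 0) * A (b, c) (b', c'))) ∧
        applySeq U (basisState3 (0, 0, 0)) m = basisState3 (1, 1, 1) ∧
        (∀ i, 1 ≤ i → i ≤ m →
          1 - ‖applySeq U (basisState3 (0, 0, 0)) i (0, 0, 0)‖ ^ 2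
            - ‖applySeq U (basisState3 (0, 0, 0)) i (1, 1, 1)‖ ^ 2 ≤ Δ) := by
  refine ⟨1000, by norm_num, fun Δ hΔ0 hΔ => ?_⟩
  have hΔ' : Δ < 1/2 := by linarith
  have hex := exists_small hΔ0 hΔ'
  set K := Nat.find hex with hKdef
  have hKs : aa Δ K ^2 ≤ Δ/2 := Nat.find_spec hex
  have hKmin : ∀ j < K, Δ/2 < aa Δ j ^2 := fun j hj => by
    have := Nat.find_min hex hj; push_neg at this; exact this
  have hK1 : 1 ≤ K := by
    by_contra h
    have hK0 : K = 0 := by omega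
    rw [hK0] at hKs
    norm_num [aa] at hKs
    linarith
  -- bound on K
  have hchain : ∀ k, k ≤ K → aa Δ k ^2 ≤ 1 - k * (Δ^2/128) := by
    intro k
    induction k with
    | zero => intro _; norm_num [aa]
    | succ k ih =>
      intro hk
      have h1 := ih (by omega)
      have h2 := aa_decrease hΔ0 hΔ' k (hKmin k (by omega))
      push_cast
      push_cast at h1
      linarith
  have hKb : (K:ℝ) * Δ^2 ≤ 128 := by
    have := hchain K le_rfl
    have h0 := sq_nonneg (aa Δ K)
    have hp : (0:ℝ) < Δ^2/128 := by positivity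
    nlinarith
  have hΔsq : (0:ℝ) < Δ^2 := by positivity
  refine ⟨2*K+2, ?_, Ugate Δ K, ?_, ?_, ?_, ?_⟩
  · rw [le_div_iff₀ hΔsq]
    push_cast
    nlinarith [hKb, hΔsq, sq_nonneg Δ, hΔ', hΔ0]
  · exact fun t ht => (Ugate_props hΔ0 hΔ' hK1 t ht).1
  · exact fun t ht => (Ugate_props hΔ0 hΔ' hK1 t ht).2
  · rw [evolve hΔ0 hΔ' hK1 (2*K+2) le_rfl, vz_last2, vw_last2, stateOf_zero_I]
  · intro i hi1 hi2
    rw [evolve hΔ0 hΔ' hK1 i hi2, junk_eval hΔ0 hΔ']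
    rcases Nat.even_or_odd i with he | ho
    · -- even positive i = 2k, 1 ≤ k ≤ K+1
      have hpar : i % 2 = 0 := Nat.even_iff.mp he
      obtain ⟨k, rfl⟩ : ∃ k, i = 2*k := ⟨i/2, by omega⟩
      have hk1 : 1 ≤ k := by omega
      rcases le_or_gt k K with hkK | hkK
      · rw [vz_even hk1 hkK, vw_even hk1 hkK]
        exact junk_B hΔ0 hΔ' (k-1)
      · -- k = K+1 : final state
        have : 2*k = 2*K+2 := by omega
        rw [this, vz_last2, vw_last2]
        simp
        linarith
    · have hpar : i % 2 = 1 := Nat.odd_iff.mp ho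
      obtain ⟨k, rfl⟩ : ∃ k, i = 2*k+1 := ⟨i/2, by omega⟩
      rcases lt_or_ge k K with hlt | hge
      · rw [vz_odd hlt, vw_odd hlt]
        exact junk_A hΔ0 hΔ' k
      · have : 2*k+1 = 2*K+1 := by omega
        rw [this, vz_last1, vw_last1]
        have h0 := (aa_pos_le hΔ0 hΔ' K).1
        have h1 := (aa_pos_le hΔ0 hΔ' K).2
        have hb := bOf_sq (a := aa Δ K) (by linarith) h1
        have e1 : (Complex.I * ((aa Δ K : ℝ) : ℂ)).re = 0 := by simp
        have e2 : (Complex.I * ((bOf (aa Δ K) : ℝ) : ℂ)).im = bOf (aa Δ K) := by simp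
        rw [e1, e2]
        nlinarith [hKs, hb]


/-- **Tightness of the Traversal Lemma.** There is a constant `C > 0` such that for every
`0 < Δ < 1/2` there are `m ≤ C/Δ²` two-local unitaries (each acting only on qubits {1,2} or
only on qubits {2,3}) mapping `|000⟩` exactly to `|111⟩` such that every intermediate state
`v_i` satisfies `1 - |⟨000|v_i⟩|² - |⟨111|v_i⟩|² ≤ Δ`. -/
theorem traversal_lemma_tight :
    ∃ C : ℝ, 0 < C ∧ ∀ Δ : ℝ, 0 < Δ → Δ < 1 / 2 →
      ∃ m : ℕ, (m : ℝ) ≤ C / Δ ^ 2 ∧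
      ∃ U : ℕ → Matrix (Fin 2 × Fin 2 × Fin 2) (Fin 2 × Fin 2 × Fin 2) ℂ,
        (∀ t < m, U t ∈ Matrix.unitaryGroup (Fin 2 × Fin 2 × Fin 2) ℂ) ∧
        (∀ t < m,
          (∃ A ∈ Matrix.unitaryGroup (Fin 2 × Fin 2) ℂ, ∀ a b c a' b' c',
              U t (a, b, c) (a', b', c') = A (a, b) (a', b') * (if c = c' then 1 else 0)) ∨
          (∃ A ∈ Matrix.unitaryGroup (Fin 2 × Fin 2) ℂ, ∀ a b c a' b' c',
              U t (a, b, c) (a', b', c') = (if a = a' then 1 else 0) * A (b, c) (b', c'))) ∧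
        applySeq U (basisState3 (0, 0, 0)) m = basisState3 (1, 1, 1) ∧
        (∀ i, 1 ≤ i → i ≤ m →
          1 - ‖applySeq U (basisState3 (0, 0, 0)) i (0, 0, 0)‖ ^ 2
            - ‖applySeq U (basisState3 (0, 0, 0)) i (1, 1, 1)‖ ^ 2 ≤ Δ) := by
  exact traversal_lemma_tight'
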